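/- arXiv:2412.01264 — 2 statements merged into one kernel-verified Lean document; each statement's English description precedes it below -/
import Mathlib

section
/- In the LSAP partition reduction, for any choice of subset I ⊆ [n] of size p selected at leaf 1 (with leaf 2 forced to select items n+1,...,n+p), the worst-case cost equals pW + max{X(I), W − X(I)}, where X(I) = Σ_{i∈I} w_i. Hence the minimum over I with |I| = p of this cost is at least pW + W/2, with equality if and only if some size-p subset I satisfies X(I) = W/2. -/
/-- In the LSAP partition reduction, the worst-case cost for a size-p subset I
selected at leaf 1 equals pW + max{X(I), W − X(I)}; hence the minimum over such
I is at least pW + W/2, with equality iff some size-p subset has weight W/2. -/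
theorem stmt7 (n p : ℕ) (hp : n = 2 * p)
    (w : Fin n → ℕ) (hw : ∀ i, 0 < w i)
    (W : ℕ) (hW : W = ∑ i, w i) :
    (∀ I : Finset (Fin n), I.card = p →
      ((p : ℝ) * W - (∑ i ∈ I, (w i : ℝ))) + max (2 * ∑ i ∈ I, (w i : ℝ)) (W : ℝ) =
        (p : ℝ) * W + max (∑ i ∈ I, (w i : ℝ)) ((W : ℝ) - ∑ i ∈ I, (w i : ℝ))) ∧
    (p : ℝ) * W + (W : ℝ) / 2 ≤
      sInf {v : ℝ | ∃ I : Finset (Fin n), I.card = p ∧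
        v = (p : ℝ) * W + max (∑ i ∈ I, (w i : ℝ)) ((W : ℝ) - ∑ i ∈ I, (w i : ℝ))} ∧
    (sInf {v : ℝ | ∃ I : Finset (Fin n), I.card = p ∧
        v = (p : ℝ) * W + max (∑ i ∈ I, (w i : ℝ)) ((W : ℝ) - ∑ i ∈ I, (w i : ℝ))} =
        (p : ℝ) * W + (W : ℝ) / 2 ↔
      ∃ I : Finset (Fin n), I.card = p ∧ (∑ i ∈ I, (w i : ℝ)) = (W : ℝ) / 2) := by
  set f : Finset (Fin n) → ℝ := fun I =>
    (p : ℝ) * W + max (∑ i ∈ I, (w i : ℝ)) ((W : ℝ) - ∑ i ∈ I, (w i : ℝ)) with hf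
  set S : Set ℝ := {v : ℝ | ∃ I : Finset (Fin n), I.card = p ∧ v = f I} with hS
  have hfin : S.Finite := by
    apply Set.Finite.subset (Set.finite_range f)
    rintro v ⟨I, -, rfl⟩; exact ⟨I, rfl⟩
  have hne : S.Nonempty := by
    obtain ⟨I, -, hI⟩ := Finset.exists_subset_card_eq (s := (Finset.univ : Finset (Fin n))) (n := p)
      (by simp [hp]; omega)
    exact ⟨f I, I, hI, rfl⟩
  have hlb : ∀ v ∈ S, (p : ℝ) * W + (W : ℝ) / 2 ≤ v := by
    rintro v ⟨I, -, rfl⟩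
    have : (W : ℝ) / 2 ≤ max (∑ i ∈ I, (w i : ℝ)) ((W : ℝ) - ∑ i ∈ I, (w i : ℝ)) := by
      rcases le_total (∑ i ∈ I, (w i : ℝ)) ((W : ℝ) / 2) with h | h
      · exact le_max_of_le_right (by linarith)
      · exact le_max_of_le_left h
    simp only [hf]; linarith
  have hge : (p : ℝ) * W + (W : ℝ) / 2 ≤ sInf S := le_csInf hne hlb
  refine ⟨fun I _ => by rcases le_total (∑ i ∈ I, (w i : ℝ)) ((W : ℝ) - ∑ i ∈ I, (w i : ℝ))
    with h | h <;> [rw [max_eq_right (by linarith), max_eq_right h];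
      rw [max_eq_left (by linarith), max_eq_left h]] <;> ring, hge, ?_⟩
  constructor
  · intro heq
    have hmem : sInf S ∈ S := hne.csInf_mem hfin
    obtain ⟨I, hI, hv⟩ := hmem
    refine ⟨I, hI, ?_⟩
    have h1 : f I = (p : ℝ) * W + (W : ℝ) / 2 := by rw [← hv, heq]
    simp only [hf] at h1
    have h2 : max (∑ i ∈ I, (w i : ℝ)) ((W : ℝ) - ∑ i ∈ I, (w i : ℝ)) = (W : ℝ) / 2 := by
      linarith [h1]
    have h3 := le_max_left (∑ i ∈ I, (w i : ℝ)) ((W : ℝ) - ∑ i ∈ I, (w i : ℝ))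
    have h4 := le_max_right (∑ i ∈ I, (w i : ℝ)) ((W : ℝ) - ∑ i ∈ I, (w i : ℝ))
    rw [h2] at h3 h4; linarith
  · rintro ⟨I, hI, hX⟩
    have hmem : (p : ℝ) * W + (W : ℝ) / 2 ∈ S := by
      refine ⟨I, hI, ?_⟩
      simp only [hf, hX]
      rw [max_eq_left (by linarith)]
    exact le_antisymm (csInf_le hfin.bddBelow hmem) hge
end

section
/- Under the local budgeted uncertainty set, the adversary problem decomposes: the maximum over ξ ∈ U_loc(Γ) of Σ_{j∈[N]} c_j^T T(c_j + ξ_j) equals Σ_{j∈[N]} max{ c_j^T x_k : k ∈ K, ρ_k^j ≤ Γ }, where ρ_k^j is the minimum ℓ1-norm of a perturbation routing sample j to leaf k. -/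
/-- Univariate decision trees over ℝ^n with leaf labels in `K`. -/
inductive UTree (n : ℕ) (K : Type) where
  | leaf : K → UTree n K
  | node : Fin n → ℝ → UTree n K → UTree n K → UTree n K

namespace UTree

/-- Route a vector through the tree: go left iff `v i ≤ θ`. -/
noncomputable def route {n : ℕ} {K : Type} : UTree n K → (Fin n → ℝ) → K
  | leaf k, _ => k
  | node i θ l r, v => if v i ≤ θ then l.route v else r.route v

/-- Depth of the tree. -/
def depth {n : ℕ} {K : Type} : UTree n K → ℕ
  | leaf _ => 0
  | node _ _ l r => 1 + max l.depth r.depth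

/-- List of leaf labels of the tree. -/
def leavesList {n : ℕ} {K : Type} : UTree n K → List K
  | leaf k => [k]
  | node _ _ l r => l.leavesList ++ r.leavesList

/-- All thresholds at splits on coordinate `i` lie in `[lo i, hi i]`. -/
def validThresh {n : ℕ} {K : Type} (lo hi : Fin n → ℝ) : UTree n K → Prop
  | leaf _ => True
  | node i θ l r => lo i ≤ θ ∧ θ ≤ hi i ∧ validThresh lo hi l ∧ validThresh lo hi r

end UTree

lemma route_mem_leavesList {n : ℕ} {K : Type} (t : UTree n K) (v : Fin n → ℝ) :
    t.route v ∈ t.leavesList := by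
  induction t with
  | leaf k => simp [UTree.route, UTree.leavesList]
  | node i θ l r hl hr =>
    simp only [UTree.route, UTree.leavesList, List.mem_append]
    split_ifs with h
    · exact Or.inl hl
    · exact Or.inr hr

/-- Under the local budgeted uncertainty set, the adversary problem decomposes
samplewise: the worst case equals the sum over samples of the worst leaf
reachable within the per-sample budget. -/
theorem stmt9 (n N : ℕ) (K : Type) (c : Fin N → Fin n → ℝ)
    (t : UTree n K) (sol : K → (Fin n → ℝ))
    (Γ : ℝ) (hΓ : 0 ≤ Γ)
    (ρ : Fin N → K → ℝ)
    -- ρ j k is attained by some perturbation routing sample j to leaf k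
    (hatt : ∀ j : Fin N, ∀ k ∈ t.leavesList,
      ∃ ξ : Fin n → ℝ, (∑ i, |ξ i|) = ρ j k ∧ t.route (fun i => c j i + ξ i) = k)
    -- ρ j k is a lower bound on the ℓ1-norm of any such perturbation
    (hmin : ∀ (j : Fin N) (k : K) (ξ : Fin n → ℝ),
      t.route (fun i => c j i + ξ i) = k → ρ j k ≤ ∑ i, |ξ i|)
    -- the nominal leaf costs nothing and is a leaf of the tree
    (hnom0 : ∀ j : Fin N, ρ j (t.route (c j)) = 0)
    (hnomleaf : ∀ j : Fin N, t.route (c j) ∈ t.leavesList) :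
    sSup {w : ℝ | ∃ ξ : Fin N → Fin n → ℝ,
        (∀ j, ∑ i, |ξ j i| ≤ Γ) ∧
        w = ∑ j, ∑ i, c j i * sol (t.route (fun i' => c j i' + ξ j i')) i} =
      ∑ j, sSup {w : ℝ | ∃ k ∈ t.leavesList, ρ j k ≤ Γ ∧
        w = ∑ i, c j i * sol k i} := by
  
  classical
  set S : Fin N → Set ℝ := fun j => {w : ℝ | ∃ k ∈ t.leavesList, ρ j k ≤ Γ ∧
        w = ∑ i, c j i * sol k i} with hSdef
  set F : Fin N → Finset ℝ := fun j =>
    (t.leavesList.toFinset.filter (fun k => ρ j k ≤ Γ)).image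
      (fun k => ∑ i, c j i * sol k i) with hFdef
  have hSF : ∀ j, S j = ↑(F j) := by
    intro j
    ext w
    simp only [hSdef, hFdef, Set.mem_setOf_eq, Finset.coe_image, Set.mem_image,
      Finset.mem_coe, Finset.mem_filter, List.mem_toFinset]
    constructor
    · rintro ⟨k, hk, hρ, rfl⟩; exact ⟨k, ⟨hk, hρ⟩, rfl⟩
    · rintro ⟨k, ⟨hk, hρ⟩, rfl⟩; exact ⟨k, hk, hρ, rfl⟩
  have hFne : ∀ j, (F j).Nonempty := by
    intro j
    refine ⟨∑ i, c j i * sol (t.route (c j)) i, ?_⟩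
    simp only [hFdef, Finset.mem_image, Finset.mem_filter, List.mem_toFinset]
    exact ⟨t.route (c j), ⟨hnomleaf j, by rw [hnom0 j]; exact hΓ⟩, rfl⟩
  have hSsup : ∀ j, sSup (S j) = (F j).max' (hFne j) := by
    intro j; rw [hSF j]; exact (hFne j).csSup_eq_max'
  -- membership of per-sample values
  have hmem : ∀ (j : Fin N) (ξ : Fin n → ℝ), (∑ i, |ξ i|) ≤ Γ →
      (∑ i, c j i * sol (t.route (fun i' => c j i' + ξ i')) i) ∈ S j := by
    intro j ξ hb
    refine ⟨t.route (fun i' => c j i' + ξ i'),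
      route_mem_leavesList t _, ?_, rfl⟩
    exact le_trans (hmin j _ ξ rfl) hb
  have hub : ∀ w ∈ {w : ℝ | ∃ ξ : Fin N → Fin n → ℝ,
        (∀ j, ∑ i, |ξ j i| ≤ Γ) ∧
        w = ∑ j, ∑ i, c j i * sol (t.route (fun i' => c j i' + ξ j i')) i},
      w ≤ ∑ j, (F j).max' (hFne j) := by
    rintro w ⟨ξ, hb, rfl⟩
    refine Finset.sum_le_sum fun j _ => ?_
    refine Finset.le_max' _ _ ?_
    have := hmem j (ξ j) (hb j)
    rwa [hSF j] at this
  -- the sum of maxima is attained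
  have hattain : (∑ j, (F j).max' (hFne j)) ∈ {w : ℝ | ∃ ξ : Fin N → Fin n → ℝ,
        (∀ j, ∑ i, |ξ j i| ≤ Γ) ∧
        w = ∑ j, ∑ i, c j i * sol (t.route (fun i' => c j i' + ξ j i')) i} := by
    have hmax : ∀ j, ∃ ξ : Fin n → ℝ, (∑ i, |ξ i|) ≤ Γ ∧
        (F j).max' (hFne j) = ∑ i, c j i * sol (t.route (fun i' => c j i' + ξ i')) i := by
      intro j
      have hm : (F j).max' (hFne j) ∈ S j := by
        rw [hSF j]; exact Finset.max'_mem _ _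
      obtain ⟨k, hk, hρ, hw⟩ := hm
      obtain ⟨ξ, hξn, hξr⟩ := hatt j k hk
      exact ⟨ξ, hξn ▸ hρ, by rw [hw, hξr]⟩
    choose ξ hξb hξv using hmax
    exact ⟨ξ, hξb, Finset.sum_congr rfl fun j _ => hξv j⟩
  rw [show (∑ j, sSup {w : ℝ | ∃ k ∈ t.leavesList, ρ j k ≤ Γ ∧
        w = ∑ i, c j i * sol k i}) = ∑ j, (F j).max' (hFne j) from
      Finset.sum_congr rfl fun j _ => hSsup j]
  exact le_antisymm (csSup_le ⟨_, hattain⟩ hub) (le_csSup ⟨_, hub⟩ hattain)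
end
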